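/- For a spherically symmetric probability measure μ on ℝ^d, the function x ↦ E_{w∼μ}[‖w‖·ReLU(⟨w,x⟩)] equals C_Γ · (E_{w∼μ}‖w‖²/√d) · ‖x‖, where C_Γ = Γ(d/2)·√d / (2√π·Γ((d+1)/2)). -/

import Mathlib

open MeasureTheory Real

noncomputable def Cgamma (d : ℕ) : ℝ :=
  Real.Gamma ((d : ℝ) / 2) * Real.sqrt d / (2 * Real.sqrt π * Real.Gamma (((d : ℝ) + 1) / 2))

section Helpers

open Set

variable {d : ℕ}

local notation "E" => EuclideanSpace ℝ (Fin d)

private lemma exists_rot (u v : E) (hd : 1 ≤ d) (hu : ‖u‖ = 1) (hv : ‖v‖ = 1) :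
    ∃ R : E ≃ₗᵢ[ℝ] E, R u = v := by
  have hcard : Module.finrank ℝ E = Fintype.card (Fin d) := by simp
  have i0 : Fin d := ⟨0, hd⟩
  have horth : ∀ w : E, ‖w‖ = 1 →
      Orthonormal ℝ (({i0} : Set (Fin d)).restrict (fun _ : Fin d => w)) := by
    intro w hw
    refine ⟨fun i => hw, fun i j hij => absurd (Subsingleton.elim i j) hij⟩
  obtain ⟨b, hb⟩ := (horth u hu).exists_orthonormalBasis_extension_of_card_eq hcard
  obtain ⟨c, hc⟩ := (horth v hv).exists_orthonormalBasis_extension_of_card_eq hcard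
  refine ⟨b.repr.trans c.repr.symm, ?_⟩
  have h1 : u = b i0 := (hb i0 rfl).symm
  have h2 : v = c i0 := (hc i0 rfl).symm
  rw [h1, h2]
  simp [LinearIsometryEquiv.trans_apply, OrthonormalBasis.repr_self,
    OrthonormalBasis.repr_symm_single]

private lemma cont_integrand (y : E) :
    Continuous fun w : E => ‖w‖ * max (inner ℝ w y : ℝ) 0 :=
  continuous_norm.mul ((continuous_id.inner continuous_const).max continuous_const)

private lemma F_rot (μ : Measure E)
    (hrot : ∀ R : E ≃ₗᵢ[ℝ] E, μ.map R = μ) (R : E ≃ₗᵢ[ℝ] E) (y : E) :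
    ∫ w, ‖w‖ * max (inner ℝ w (R y) : ℝ) 0 ∂μ = ∫ w, ‖w‖ * max (inner ℝ w y : ℝ) 0 ∂μ := by
  conv_lhs => rw [← hrot R]
  rw [integral_map R.continuous.measurable.aemeasurable
    ((cont_integrand (R y)).aestronglyMeasurable)]
  simp only [LinearIsometryEquiv.norm_map, LinearIsometryEquiv.inner_map_map]

private lemma F_hom (μ : Measure E) (c : ℝ) (hc : 0 ≤ c) (y : E) :
    ∫ w, ‖w‖ * max (inner ℝ w (c • y) : ℝ) 0 ∂μ
      = c * ∫ w, ‖w‖ * max (inner ℝ w y : ℝ) 0 ∂μ := by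
  rw [← integral_const_mul]
  congr 1
  ext w
  have hmax : ∀ t : ℝ, max (c * t) 0 = c * max t 0 := fun t => by
    rw [mul_max_of_nonneg _ _ hc, mul_zero]
  rw [real_inner_smul_right, hmax]
  ring

private lemma F_eq (hd : 1 ≤ d) (μ : Measure E)
    (hrot : ∀ R : E ≃ₗᵢ[ℝ] E, μ.map R = μ) (y : E) :
    ∫ w, ‖w‖ * max (inner ℝ w y : ℝ) 0 ∂μ
      = (∫ w, ‖w‖ * max (inner ℝ w (EuclideanSpace.single (⟨0, hd⟩ : Fin d) (1:ℝ)) : ℝ) 0 ∂μ)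
        * ‖y‖ := by
  set e0 : E := EuclideanSpace.single (⟨0, hd⟩ : Fin d) (1:ℝ) with he0
  rcases eq_or_ne y 0 with rfl | hy
  · simp
  · have hny : (0:ℝ) < ‖y‖ := norm_pos_iff.mpr hy
    set u : E := ‖y‖⁻¹ • y with hu
    have hnu : ‖u‖ = 1 := by
      rw [hu, norm_smul]
      simp [abs_of_pos (inv_pos.mpr hny), inv_mul_cancel₀ hny.ne']
    have hne0 : ‖e0‖ = 1 := by simp [he0, EuclideanSpace.norm_single]
    obtain ⟨R, hR⟩ := exists_rot e0 u hd hne0 hnu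
    have hyu : y = ‖y‖ • u := by rw [hu, smul_smul, mul_inv_cancel₀ hny.ne', one_smul]
    calc ∫ w, ‖w‖ * max (inner ℝ w y : ℝ) 0 ∂μ
        = ∫ w, ‖w‖ * max (inner ℝ w (‖y‖ • u) : ℝ) 0 ∂μ := by rw [← hyu]
      _ = ‖y‖ * ∫ w, ‖w‖ * max (inner ℝ w u : ℝ) 0 ∂μ := F_hom μ _ hny.le u
      _ = ‖y‖ * ∫ w, ‖w‖ * max (inner ℝ w e0 : ℝ) 0 ∂μ := by rw [← hR, F_rot μ hrot]
      _ = _ := mul_comm _ _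

private lemma oneD_relu : ∫ t : ℝ, max t 0 * rexp (-t^2/2) = 1 := by
  rw [← setIntegral_eq_integral_of_forall_compl_eq_zero
    (s := Ioi (0:ℝ)) (fun t ht => by
      rw [max_eq_right (by simpa using ht), zero_mul])]
  rw [setIntegral_congr_fun measurableSet_Ioi
    (show Set.EqOn (fun t : ℝ => max t 0 * rexp (-t^2/2))
      (fun t : ℝ => t ^ (1:ℝ) * rexp (-(1/2) * t ^ (2:ℝ))) (Ioi 0) by
      intro t ht
      have ht' : (0:ℝ) < t := ht
      simp only
      rw [max_eq_left ht'.le, rpow_one, rpow_two]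
      ring_nf)]
  rw [integral_rpow_mul_exp_neg_mul_rpow two_pos (by norm_num) (by norm_num : (0:ℝ) < 1/2)]
  rw [show (-((1:ℝ)+1)/2) = -1 by norm_num, show ((1:ℝ)+1)/2 = 1 by norm_num,
    Real.rpow_neg_one, Real.Gamma_one]
  norm_num

private lemma oneD_gauss : ∫ t : ℝ, rexp (-t^2/2) = Real.sqrt (2*π) := by
  have := integral_gaussian (1/2)
  rw [show ∀ f g : ℝ → ℝ, (∀ x, f x = g x) → (∫ x, f x) = ∫ x, g x from
    fun f g h => by rw [funext h]] at this
  · rw [this, show π / (1/2) = 2 * π by ring]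
  · intro x; rw [show -(1/2) * x^2 = -x^2/2 by ring]

private lemma J_val (i0 : Fin d) :
    ∫ v : E, max (inner ℝ (EuclideanSpace.single i0 (1:ℝ)) v : ℝ) 0 * rexp (-‖v‖^2/2)
      = Real.sqrt (2*π) ^ (d-1) := by
  have hpres := (EuclideanSpace.volume_preserving_symm_measurableEquiv_toLp (Fin d)).symm
  rw [← hpres.integral_comp (MeasurableEquiv.measurableEmbedding _)]
  have hcoord : ∀ (y : Fin d → ℝ) (i : Fin d),
      ((MeasurableEquiv.toLp 2 (Fin d → ℝ)).symm.symm y) i = y i := fun y i => rfl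
  have hinner : ∀ y : Fin d → ℝ,
      (inner ℝ (EuclideanSpace.single i0 (1:ℝ)) ((MeasurableEquiv.toLp 2 (Fin d → ℝ)).symm.symm y) : ℝ)
        = y i0 := by
    intro y
    rw [EuclideanSpace.inner_single_left]
    simp [hcoord]
  have hnorm : ∀ y : Fin d → ℝ,
      ‖(MeasurableEquiv.toLp 2 (Fin d → ℝ)).symm.symm y‖^2 = ∑ i, (y i)^2 := by
    intro y
    rw [EuclideanSpace.norm_eq]
    rw [Real.sq_sqrt (by positivity)]
    simp [hcoord, sq_abs]
  calc ∫ y : Fin d → ℝ, max (inner ℝ (EuclideanSpace.single i0 (1:ℝ))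
          ((MeasurableEquiv.toLp 2 (Fin d → ℝ)).symm.symm y) : ℝ) 0
          * rexp (-‖(MeasurableEquiv.toLp 2 (Fin d → ℝ)).symm.symm y‖^2/2)
      = ∫ y : Fin d → ℝ, ∏ i, ((if i = i0 then max (y i) 0 else 1) * rexp (-(y i)^2/2)) := by
        congr 1
        ext y
        rw [hinner, hnorm, Finset.prod_mul_distrib, ← Real.exp_sum]
        congr 1
        · simp [Finset.prod_ite_eq']
        · congr 1
          rw [← Finset.sum_neg_distrib, ← Finset.sum_div]
    _ = ∏ i, ∫ t : ℝ, (if i = i0 then max t 0 else 1) * rexp (-t^2/2) :=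
        integral_fintype_prod_eq_prod
          (f := fun i t => (if i = i0 then max t 0 else 1) * rexp (-t^2/2))
    _ = ∏ i, (if i = i0 then (1:ℝ) else Real.sqrt (2*π)) := by
        refine Finset.prod_congr rfl fun i _ => ?_
        by_cases h : i = i0 <;> simp [h, oneD_relu, oneD_gauss]
    _ = Real.sqrt (2*π) ^ (d-1) := by
        rw [Finset.prod_eq_prod_diff_singleton_mul (Finset.mem_univ i0)
          (fun i => if i = i0 then (1:ℝ) else Real.sqrt (2*π)), if_pos rfl, mul_one]
        rw [Finset.prod_congr rfl (fun i hi =>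
          if_neg (Finset.notMem_singleton.mp (Finset.mem_sdiff.mp hi).2))]
        rw [Finset.prod_const]
        congr 1
        rw [Finset.card_sdiff_of_subset (by simp), Finset.card_univ, Fintype.card_fin,
          Finset.card_singleton]

private lemma gauss_inner (hd : 1 ≤ d) (w : E) :
    ∫ v : E, max (inner ℝ w v : ℝ) 0 * rexp (-‖v‖^2/2)
      = ‖w‖ * Real.sqrt (2*π) ^ (d-1) := by
  rcases eq_or_ne w 0 with rfl | hw
  · simp
  · have hnw : (0:ℝ) < ‖w‖ := norm_pos_iff.mpr hw
    set u : E := ‖w‖⁻¹ • w with hu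
    have hnu : ‖u‖ = 1 := by
      rw [hu, norm_smul]
      simp [abs_of_pos (inv_pos.mpr hnw), inv_mul_cancel₀ hnw.ne']
    have hne0 : ‖EuclideanSpace.single (⟨0, hd⟩ : Fin d) (1:ℝ)‖ = 1 := by
      simp [EuclideanSpace.norm_single]
    obtain ⟨R, hR⟩ := exists_rot (EuclideanSpace.single (⟨0, hd⟩ : Fin d) (1:ℝ)) u hd hne0 hnu
    have hwu : w = ‖w‖ • u := by rw [hu, smul_smul, mul_inv_cancel₀ hnw.ne', one_smul]
    have hmax : ∀ t : ℝ, max (‖w‖ * t) 0 = ‖w‖ * max t 0 := fun t => by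
      rw [mul_max_of_nonneg _ _ hnw.le, mul_zero]
    calc ∫ v : E, max (inner ℝ w v : ℝ) 0 * rexp (-‖v‖^2/2)
        = ∫ v : E, ‖w‖ * (max (inner ℝ u v : ℝ) 0 * rexp (-‖v‖^2/2)) := by
          congr 1
          ext v
          conv_lhs => rw [hwu]
          rw [real_inner_smul_left, hmax]
          ring
      _ = ‖w‖ * ∫ v : E, max (inner ℝ u v : ℝ) 0 * rexp (-‖v‖^2/2) := integral_const_mul _ _
      _ = ‖w‖ * ∫ v : E, max (inner ℝ (EuclideanSpace.single (⟨0, hd⟩ : Fin d) (1:ℝ)) v : ℝ) 0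
            * rexp (-‖v‖^2/2) := by
          congr 1
          rw [← hR]
          rw [← R.measurePreserving.integral_comp (R.toHomeomorph.measurableEmbedding)
            (fun v => max (inner ℝ (R (EuclideanSpace.single (⟨0, hd⟩ : Fin d) (1:ℝ))) v : ℝ) 0
              * rexp (-‖v‖^2/2))]
          simp only [LinearIsometryEquiv.inner_map_map, LinearIsometryEquiv.norm_map]
      _ = ‖w‖ * Real.sqrt (2*π) ^ (d-1) := by rw [J_val]

private lemma N_val (hd : 1 ≤ d) :
    ∫ v : E, ‖v‖ * rexp (-‖v‖^2/2)
      = (d:ℝ) * (Real.sqrt π ^ d / Gamma ((d:ℝ)/2 + 1))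
        * ((1/2:ℝ) ^ (-((d:ℝ)+1)/2) * (1/2) * Gamma (((d:ℝ)+1)/2)) := by
  haveI : Nonempty (Fin d) := ⟨⟨0, hd⟩⟩
  haveI : Nontrivial E := by
    refine nontrivial_of_ne (EuclideanSpace.single (⟨0, hd⟩ : Fin d) (1:ℝ)) 0 fun h => ?_
    have : ‖EuclideanSpace.single (⟨0, hd⟩ : Fin d) (1:ℝ)‖ = 1 := by
      simp [EuclideanSpace.norm_single]
    rw [h] at this
    simp at this
  have hdim : Module.finrank ℝ (EuclideanSpace ℝ (Fin d)) = d := by simp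
  have h := integral_fun_norm_addHaar (volume : Measure (EuclideanSpace ℝ (Fin d)))
    (fun r : ℝ => r * rexp (-r^2/2))
  rw [hdim] at h
  rw [h]
  have hball : ((volume : Measure (EuclideanSpace ℝ (Fin d))) (Metric.ball 0 1)).toReal
      = Real.sqrt π ^ d / Gamma ((d:ℝ)/2 + 1) := by
    rw [EuclideanSpace.volume_ball]
    simp only [Fintype.card_fin]
    rw [ENNReal.toReal_mul, ENNReal.toReal_pow, ENNReal.toReal_ofReal (by norm_num),
      ENNReal.toReal_ofReal (by positivity)]
    simp
  rw [measureReal_def, hball]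
  have hIoi : ∫ y in Ioi (0:ℝ), y ^ (d-1) • (y * rexp (-y^2/2))
      = (1/2:ℝ) ^ (-((d:ℝ)+1)/2) * (1/2) * Gamma (((d:ℝ)+1)/2) := by
    rw [setIntegral_congr_fun measurableSet_Ioi
      (show Set.EqOn (fun y : ℝ => y ^ (d-1) • (y * rexp (-y^2/2)))
        (fun y : ℝ => y ^ ((d:ℝ)) * rexp (-(1/2) * y ^ (2:ℝ))) (Ioi 0) by
        intro y hy
        have hy' : (0:ℝ) < y := hy
        simp only [smul_eq_mul]
        rw [← mul_assoc, ← pow_succ, Nat.sub_add_cancel hd, ← Real.rpow_natCast y d,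
          Real.rpow_two]
        ring_nf)]
    rw [integral_rpow_mul_exp_neg_mul_rpow two_pos
      (lt_of_lt_of_le neg_one_lt_zero (Nat.cast_nonneg d)) (by norm_num : (0:ℝ) < 1/2)]
  rw [hIoi]
  simp only [nsmul_eq_mul, smul_eq_mul]
  ring

private lemma integrable_norm_exp :
    Integrable (fun v : E => ‖v‖ * rexp (-‖v‖^2/2)) := by
  have hc := GaussianFourier.integrable_cexp_neg_mul_sq_norm_add
    (V := EuclideanSpace ℝ (Fin d)) (b := (1/4 : ℂ)) (by norm_num) 0 0
  have hg : Integrable (fun v : E => rexp (-‖v‖^2/4)) := by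
    have := hc.norm
    refine this.congr (ae_of_all _ fun v => ?_)
    simp only
    rw [Complex.norm_exp]
    congr 1
    have : ((‖v‖:ℂ) ^ 2).re = ‖v‖ ^ 2 := by
      rw [← Complex.ofReal_pow, Complex.ofReal_re]
    simp [this]
    ring_nf
  have key : ∀ t : ℝ, 0 ≤ t → t * rexp (-t^2/2) ≤ 2 * rexp (-t^2/4) := by
    intro t ht
    have h1 : t ≤ 2 * rexp (t^2/4) := by
      nlinarith [Real.add_one_le_exp (t^2/4), sq_nonneg (t-2)]
    calc t * rexp (-t^2/2) ≤ (2 * rexp (t^2/4)) * rexp (-t^2/2) :=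
          mul_le_mul_of_nonneg_right h1 (Real.exp_pos _).le
      _ = 2 * rexp (-t^2/4) := by
          rw [mul_assoc, ← Real.exp_add]
          congr 1
          ring
  refine (hg.const_mul 2).mono' ?_ (ae_of_all _ fun v => ?_)
  · exact (continuous_norm.mul (Real.continuous_exp.comp
      (by fun_prop))).aestronglyMeasurable
  · rw [Real.norm_eq_abs, abs_of_nonneg (by positivity)]
    exact key ‖v‖ (norm_nonneg v)

private lemma arith (hd : 1 ≤ d) :
    Real.sqrt (2*π) ^ (d-1) * Real.sqrt d
      = Cgamma d * ((d:ℝ) * (Real.sqrt π ^ d / Gamma ((d:ℝ)/2 + 1))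
          * ((1/2:ℝ) ^ (-((d:ℝ)+1)/2) * (1/2) * Gamma (((d:ℝ)+1)/2))) := by
  obtain ⟨m, rfl⟩ : ∃ m, d = m + 1 := ⟨d - 1, (Nat.succ_pred_eq_of_pos hd).symm⟩
  have hc : ((m + 1 : ℕ) : ℝ) = (m:ℝ) + 1 := by push_cast; ring
  have hL : ((1:ℝ)/2) ^ (-((((m:ℕ):ℝ)+1)+1)/2) = (2:ℝ) ^ (((((m:ℕ):ℝ)+1)+1)/2) := by
    rw [one_div, ← Real.rpow_neg_one (2:ℝ), ← Real.rpow_mul (by norm_num)]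
    congr 1
    ring
  have hR : ((2:ℝ)) ^ ((1/2 : ℝ) * (m:ℝ) + 1) = Real.sqrt 2 ^ m * 2 := by
    rw [Real.rpow_add (by norm_num : (0:ℝ) < 2), Real.rpow_one,
      Real.rpow_mul (by norm_num : (0:ℝ) ≤ 2), Real.rpow_natCast, ← Real.sqrt_eq_rpow]
  have hGam : Gamma ((((m+1:ℕ)):ℝ)/2 + 1) = ((((m+1:ℕ)):ℝ)/2) * Gamma ((((m+1:ℕ)):ℝ)/2) := by
    rw [Real.Gamma_add_one (by rw [hc]; positivity)]
  have hsplit : Real.sqrt (2*π) = Real.sqrt 2 * Real.sqrt π :=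
    Real.sqrt_mul (by norm_num) π
  have hG1 : Gamma ((((m+1:ℕ)):ℝ)/2) ≠ 0 :=
    (Real.Gamma_pos_of_pos (by rw [hc]; positivity)).ne'
  have hG2 : Gamma (((((m+1:ℕ)):ℝ)+1)/2) ≠ 0 :=
    (Real.Gamma_pos_of_pos (by rw [hc]; positivity)).ne'
  have hsq : Real.sqrt π ≠ 0 := by positivity
  have hd' : ((m+1:ℕ):ℝ) ≠ 0 := by rw [hc]; positivity
  rw [Cgamma]
  rw [Nat.add_sub_cancel]
  rw [hGam, hsplit]
  rw [show (-((((m+1:ℕ)):ℝ)+1)/2) = (-((((m:ℕ):ℝ)+1)+1)/2) by rw [hc]]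
  rw [hL, show (((((m:ℕ):ℝ)+1)+1)/2) = (1/2:ℝ) * (m:ℝ) + 1 by ring, hR]
  field_simp
  ring

end Helpers

theorem stmt0 (d : ℕ) (hd : 1 ≤ d)
    (μ : Measure (EuclideanSpace ℝ (Fin d))) [IsProbabilityMeasure μ]
    (hrot : ∀ R : EuclideanSpace ℝ (Fin d) ≃ₗᵢ[ℝ] EuclideanSpace ℝ (Fin d),
      μ.map R = μ)
    (hmom : Integrable (fun w => ‖w‖ ^ 2) μ)
    (x : EuclideanSpace ℝ (Fin d)) :
    ∫ w, ‖w‖ * max (inner ℝ w x : ℝ) 0 ∂μ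
      = Cgamma d * ((∫ w, ‖w‖ ^ 2 ∂μ) / Real.sqrt d) * ‖x‖ := by
  set S : ℝ := ∫ w, ‖w‖ ^ 2 ∂μ with hS
  set K : ℝ := ∫ w, ‖w‖ * max (inner ℝ w (EuclideanSpace.single (⟨0, hd⟩ : Fin d) (1:ℝ)) : ℝ) 0 ∂μ
    with hK
  set J : ℝ := Real.sqrt (2*π) ^ (d-1) with hJ
  set N : ℝ := (d:ℝ) * (Real.sqrt π ^ d / Gamma ((d:ℝ)/2 + 1))
      * ((1/2:ℝ) ^ (-((d:ℝ)+1)/2) * (1/2) * Gamma (((d:ℝ)+1)/2)) with hN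
  have hd0 : (0:ℝ) < d := by exact_mod_cast hd
  -- product integrability
  have hcont : Continuous (fun z : (EuclideanSpace ℝ (Fin d)) × (EuclideanSpace ℝ (Fin d)) =>
      ‖z.1‖ * max (inner ℝ z.1 z.2 : ℝ) 0 * rexp (-‖z.2‖^2/2)) := by
    refine Continuous.mul (Continuous.mul continuous_fst.norm
      (Continuous.max continuous_inner continuous_const))
      (Real.continuous_exp.comp ?_)
    fun_prop
  have hprod : Integrable (fun z : (EuclideanSpace ℝ (Fin d)) × (EuclideanSpace ℝ (Fin d)) =>
      ‖z.1‖ * max (inner ℝ z.1 z.2 : ℝ) 0 * rexp (-‖z.2‖^2/2)) (μ.prod volume) := by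
    have hψ : Integrable (fun z : (EuclideanSpace ℝ (Fin d)) × (EuclideanSpace ℝ (Fin d)) => ‖z.1‖^2 * (‖z.2‖ * rexp (-‖z.2‖^2/2)))
        (μ.prod volume) := hmom.mul_prod integrable_norm_exp
    refine hψ.mono' hcont.aestronglyMeasurable (ae_of_all _ fun z => ?_)
    have h0 : (0:ℝ) ≤ ‖z.1‖ * max (inner ℝ z.1 z.2 : ℝ) 0 * rexp (-‖z.2‖^2/2) :=
      mul_nonneg (mul_nonneg (norm_nonneg _) (le_max_right _ _)) (Real.exp_pos _).le
    rw [Real.norm_eq_abs, abs_of_nonneg h0]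
    calc ‖z.1‖ * max (inner ℝ z.1 z.2 : ℝ) 0 * rexp (-‖z.2‖^2/2)
        ≤ ‖z.1‖ * (‖z.1‖ * ‖z.2‖) * rexp (-‖z.2‖^2/2) := by
          refine mul_le_mul_of_nonneg_right (mul_le_mul_of_nonneg_left ?_ (norm_nonneg _))
            (Real.exp_pos _).le
          exact max_le (real_inner_le_norm _ _)
            (mul_nonneg (norm_nonneg _) (norm_nonneg _))
      _ = ‖z.1‖^2 * (‖z.2‖ * rexp (-‖z.2‖^2/2)) := by ring
  -- Fubini, order 1
  have h1 : ∫ z : (EuclideanSpace ℝ (Fin d)) × (EuclideanSpace ℝ (Fin d)), ‖z.1‖ * max (inner ℝ z.1 z.2 : ℝ) 0 * rexp (-‖z.2‖^2/2)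
      ∂(μ.prod volume) = S * J := by
    rw [integral_prod _ hprod]
    have hin : ∀ w : (EuclideanSpace ℝ (Fin d)), (∫ v : (EuclideanSpace ℝ (Fin d)), ‖w‖ * max (inner ℝ w v : ℝ) 0 * rexp (-‖v‖^2/2))
        = ‖w‖^2 * J := by
      intro w
      have : (fun v : (EuclideanSpace ℝ (Fin d)) => ‖w‖ * max (inner ℝ w v : ℝ) 0 * rexp (-‖v‖^2/2))
          = fun v : (EuclideanSpace ℝ (Fin d)) => ‖w‖ * (max (inner ℝ w v : ℝ) 0 * rexp (-‖v‖^2/2)) := by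
        funext v; ring
      rw [this, integral_const_mul, gauss_inner hd w, hJ]
      ring
    rw [show (fun w : (EuclideanSpace ℝ (Fin d)) => ∫ v : (EuclideanSpace ℝ (Fin d)), ‖w‖ * max (inner ℝ w v : ℝ) 0 * rexp (-‖v‖^2/2))
      = fun w : (EuclideanSpace ℝ (Fin d)) => ‖w‖^2 * J from funext hin]
    rw [integral_mul_const, hS]
  -- Fubini, order 2
  have h2 : ∫ z : (EuclideanSpace ℝ (Fin d)) × (EuclideanSpace ℝ (Fin d)), ‖z.1‖ * max (inner ℝ z.1 z.2 : ℝ) 0 * rexp (-‖z.2‖^2/2)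
      ∂(μ.prod volume) = K * N := by
    rw [integral_prod_symm _ hprod]
    have hin : ∀ v : (EuclideanSpace ℝ (Fin d)), (∫ w, ‖w‖ * max (inner ℝ w v : ℝ) 0 * rexp (-‖v‖^2/2) ∂μ)
        = K * (‖v‖ * rexp (-‖v‖^2/2)) := by
      intro v
      rw [show (fun w : (EuclideanSpace ℝ (Fin d)) => ‖w‖ * max (inner ℝ w v : ℝ) 0 * rexp (-‖v‖^2/2))
        = fun w : (EuclideanSpace ℝ (Fin d)) => (‖w‖ * max (inner ℝ w v : ℝ) 0) * rexp (-‖v‖^2/2) from rfl]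
      rw [integral_mul_const, F_eq hd μ hrot v]
      ring
    rw [show (fun v : (EuclideanSpace ℝ (Fin d)) => ∫ w, ‖w‖ * max (inner ℝ w v : ℝ) 0 * rexp (-‖v‖^2/2) ∂μ)
      = fun v : (EuclideanSpace ℝ (Fin d)) => K * (‖v‖ * rexp (-‖v‖^2/2)) from funext hin]
    rw [integral_const_mul, N_val hd]
  have hKN : K * N = S * J := by rw [← h2, h1]
  have hNpos : 0 < N := by
    have hg1 : 0 < Gamma ((d:ℝ)/2 + 1) := Real.Gamma_pos_of_pos (by positivity)
    have hg2 : 0 < Gamma (((d:ℝ)+1)/2) := Real.Gamma_pos_of_pos (by positivity)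
    have hsp : 0 < Real.sqrt π := Real.sqrt_pos.mpr pi_pos
    rw [hN]
    refine mul_pos (mul_pos hd0 (div_pos (pow_pos hsp d) hg1))
      (mul_pos (mul_pos (Real.rpow_pos_of_pos (by norm_num) _) (by norm_num)) hg2)
  have hsd : 0 < Real.sqrt d := Real.sqrt_pos.mpr hd0
  have harith : J * Real.sqrt d = Cgamma d * N := arith hd
  have hKval : K = Cgamma d * (S / Real.sqrt d) := by
    have h3 : K = S * J / N := by
      rw [eq_div_iff hNpos.ne']
      exact hKN
    have h4 : Cgamma d = J * Real.sqrt d / N := by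
      rw [eq_div_iff hNpos.ne']
      exact harith.symm
    rw [h3, h4]
    field_simp
  rw [F_eq hd μ hrot x, ← hK, hKval, hS]
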